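/- In any monoid containing elements s_1, …, s_{n−1} satisfying the braid relations, let {1,…,n} = α ⊔ β ⊔ γ be a partition into three subsets with |α| = r, |β| = s, |γ| = t. Define π ∈ Sh_n^{r+s} by {π(1) < ⋯ < π(r+s)} = α ∪ β; define σ ∈ Sh_{r+s}^r by {σ(1) < ⋯ < σ(r)} = {i : π(i) ∈ α}; define θ ∈ Sh_n^r by {θ(1) < ⋯ < θ(r)} = α; and define δ ∈ Sh_{s+t}^s by {δ(1) < ⋯ < δ(s)} = {j : θ(r+j) ∈ β}. Then [π][σ] = [θ][δ]_{(r)}. -/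

import Mathlib

namespace BraidMonoid

variable {M : Type*} [Monoid M]

/-- `br g a b` is the element `[a;b]` of the paper: for `a ≤ b` it is the descending
product `g (b-1) * g (b-2) * ⋯ * g a`, for `b < a` it is the ascending product
`g b * g (b+1) * ⋯ * g (a-1)`, and `br g a a = 1`. -/
def br (g : ℕ → M) (a b : ℕ) : M :=
  if a ≤ b then (((List.range (b - a)).map (fun j => g (a + j))).reverse).prod
  else ((List.range (a - b)).map (fun j => g (b + j))).prod

/-- `nu g r K N` is `ν_r^{K,N} = [K;r+1][K+1;r+2]⋯[K+N-r-1;N]`. -/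
def nu (g : ℕ → M) (r K N : ℕ) : M :=
  ((List.range (N - r)).map (fun j => br g (K + j) (r + 1 + j))).prod

/-- The braid relations for the elements `g 1, …, g (n-1)`. -/
def BraidRels (g : ℕ → M) (n : ℕ) : Prop :=
  (∀ i, 1 ≤ i → i + 1 ≤ n - 1 → g i * g (i + 1) * g i = g (i + 1) * g i * g (i + 1)) ∧
  (∀ i j, 1 ≤ i → j ≤ n - 1 → i + 1 < j → g i * g j = g j * g i)

/-- `π` is an `r`-shuffle: it is strictly increasing on the first `r` positions and on
the remaining positions (0-indexed). -/
def IsShuffle (n r : ℕ) (π : Equiv.Perm (Fin n)) : Prop :=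
  (∀ i j : Fin n, i < j → (j : ℕ) < r → π i < π j) ∧
  (∀ i j : Fin n, i < j → r ≤ (i : ℕ) → π i < π j)

/-- `[π]_{(t)} = [t+1; t+π(1)] [t+2; t+π(2)] ⋯ [t+r; t+π(r)]` (1-indexed; here `π` is
0-indexed, so position `i` contributes `[t+i+1; t+π(i)+1]`). -/
def brShuffleShift (g : ℕ → M) (t N r : ℕ) (π : Equiv.Perm (Fin N)) : M :=
  (((List.finRange N).take r).map (fun (i : Fin N) => br g (t + (i : ℕ) + 1) (t + (π i : ℕ) + 1))).prod

/-- `[π] = [1;π(1)][2;π(2)]⋯[r;π(r)]`. -/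
def brShuffle (g : ℕ → M) (N r : ℕ) (π : Equiv.Perm (Fin N)) : M :=
  brShuffleShift g 0 N r π

end BraidMonoid

namespace Stmt7Aux

variable {M : Type*} [Monoid M]

/-- Braid relations hypothesis, local copy of BraidMonoid.BraidRels. -/
def BR (g : ℕ → M) (n : ℕ) : Prop :=
  (∀ i, 1 ≤ i → i + 1 ≤ n - 1 → g i * g (i + 1) * g i = g (i + 1) * g i * g (i + 1)) ∧
  (∀ i j, 1 ≤ i → j ≤ n - 1 → i + 1 < j → g i * g j = g j * g i)

/-- `A g t c = g (t+c) * g (t+c-1) * ⋯ * g (t+1)`. -/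
def A (g : ℕ → M) (t : ℕ) : ℕ → M
  | 0 => 1
  | c+1 => g (t+c+1) * A g t c

@[simp] lemma A_zero (g : ℕ → M) (t : ℕ) : A g t 0 = 1 := rfl
lemma A_succ (g : ℕ → M) (t c : ℕ) : A g t (c+1) = g (t+c+1) * A g t c := rfl

lemma A_split (g : ℕ → M) (t c : ℕ) : A g t (c+1) = A g (t+1) c * g (t+1) := by
  induction c with
  | zero => simp [A_succ]
  | succ c ih =>
      rw [A_succ, ih, A_succ]
      rw [show t + (c+1) + 1 = t + 1 + c + 1 by omega, mul_assoc]

variable {g : ℕ → M} {n : ℕ}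

lemma A_comm_hi (hg : BR g n) {t c j : ℕ} (h1 : t + c + 1 < j) (h2 : j ≤ n - 1) :
    A g t c * g j = g j * A g t c := by
  induction c with
  | zero => simp
  | succ c ih =>
      rw [A_succ, mul_assoc, ih (by omega), ← mul_assoc, ← mul_assoc,
        hg.2 (t+c+1) j (by omega) h2 (by omega)]

lemma A_comm_lo (hg : BR g n) {t c j : ℕ} (h1 : 1 ≤ j) (h2 : j + 2 ≤ t + 1)
    (h3 : t + c ≤ n - 1) : g j * A g t c = A g t c * g j := by
  induction c with
  | zero => simp
  | succ c ih =>
      rw [A_succ, ← mul_assoc, hg.2 j (t+c+1) h1 (by omega) (by omega),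
        mul_assoc, ih (by omega), mul_assoc]

lemma A_slide (hg : BR g n) {t a b : ℕ} (ha : 1 ≤ a) (hab : a ≤ b)
    (hb : t + b + 2 ≤ n) : A g t (b+1) * g (t+a+1) = g (t+a) * A g t (b+1) := by
  induction b with
  | zero => omega
  | succ b ih =>
      rcases Nat.lt_or_ge a (b+1) with h | h
      · have hb' : t + b + 2 ≤ n := by omega
        rw [A_succ, mul_assoc, ih (by omega) hb', ← mul_assoc,
          show g (t+(b+1)+1) * g (t+a) = g (t+a) * g (t+(b+1)+1) from
            (hg.2 (t+a) (t+(b+1)+1) (by omega) (by omega) (by omega)).symm,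
          mul_assoc]
      · have ha' : a = b + 1 := by omega
        subst ha'
        rw [A_succ, A_succ, mul_assoc, mul_assoc,
          A_comm_hi hg (t := t) (c := b) (j := t + (b+1) + 1) (by omega) (by omega)]
        simp only [show t + (b+1) + 1 = t + b + 1 + 1 from by omega,
          show t + (b+1) = t + b + 1 from by omega]
        rw [← mul_assoc, ← mul_assoc,
          (hg.1 (t+b+1) (by omega) (by omega)).symm, mul_assoc, mul_assoc]

lemma identI (hg : BR g n) {t a b : ℕ} (hab : a ≤ b) (hb : t + b + 2 ≤ n) :
    A g t (b+1) * A g (t+1) a = A g t a * A g (t+1) b * g (t+1) := by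
  induction a with
  | zero => simpa using A_split g t b
  | succ a ih =>
      have h1 : A g (t+1) (a+1) = g (t+a+2) * A g (t+1) a := by
        rw [A_succ]; ring_nf
      rw [h1, ← mul_assoc,
        show A g t (b+1) * g (t+a+2) = g (t+a+1) * A g t (b+1) by
          have := A_slide hg (t := t) (a := a+1) (b := b) (by omega) hab hb
          rw [show t + (a+1) + 1 = t+a+2 by omega, show t + (a+1) = t + a + 1 by omega] at this
          exact this,
        mul_assoc, ih (by omega), A_succ]
      rw [← mul_assoc, ← mul_assoc]



/-- number of entries of `L` smaller than `v` -/
def rk (v : ℕ) (L : List ℕ) : ℕ := L.countP (fun x => decide (x < v))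

lemma rk_le_length (v : ℕ) (L : List ℕ) : rk v L ≤ L.length := List.countP_le_length

lemma rk_perm (v : ℕ) {L₁ L₂ : List ℕ} (h : L₁.Perm L₂) : rk v L₁ = rk v L₂ :=
  h.countP_eq _

lemma rk_cons_of_lt {v x : ℕ} (h : x < v) (L : List ℕ) : rk v (x :: L) = rk v L + 1 := by
  simp [rk, List.countP_cons, h]

lemma rk_cons_of_ge {v x : ℕ} (h : ¬ x < v) (L : List ℕ) : rk v (x :: L) = rk v L := by
  simp [rk, List.countP_cons, h]

lemma rk_mono {x y : ℕ} (h : x ≤ y) (L : List ℕ) : rk x L ≤ rk y L := by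
  apply List.countP_mono_left
  intro a _ ha
  simp only [decide_eq_true_eq] at *
  omega

/-- the normal-form evaluation of a one-line list -/
def Phi (g : ℕ → M) : ℕ → List ℕ → M
  | _, [] => 1
  | t, v :: L => A g t (rk v L) * Phi g (t+1) L

@[simp] lemma Phi_nil (t : ℕ) : Phi g t [] = 1 := rfl
lemma Phi_cons (t v : ℕ) (L : List ℕ) :
    Phi g t (v :: L) = A g t (rk v L) * Phi g (t+1) L := rfl

lemma Phi_comm_lo (hg : BR g n) {j : ℕ} (h1 : 1 ≤ j) :
    ∀ (L : List ℕ) (t : ℕ), j + 2 ≤ t + 1 → t + L.length ≤ n →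
      g j * Phi g t L = Phi g t L * g j := by
  intro L
  induction L with
  | nil => simp
  | cons v L ih =>
      intro t h2 h3
      rw [Phi_cons, ← mul_assoc,
        A_comm_lo hg h1 h2 (by have := rk_le_length v L; simp at h3; omega),
        mul_assoc, ih (t+1) (by omega) (by simp at h3 ⊢; omega), mul_assoc]

/-- evaluation changes by a right factor `g (t+1)` upon swapping the two head entries,
provided they are in increasing order. -/
lemma swapHead (hg : BR g n) {x y : ℕ} (hxy : x < y) (L : List ℕ) (t : ℕ)
    (hlen : t + L.length + 2 ≤ n) :
    Phi g t (y :: x :: L) = Phi g t (x :: y :: L) * g (t+1) := by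
  have hb : rk x L ≤ rk y L := rk_mono (by omega) L
  have hbl : rk y L ≤ L.length := rk_le_length _ _
  have hcomm : g (t+1) * Phi g (t+2) L = Phi g (t+2) L * g (t+1) :=
    Phi_comm_lo hg (by omega) L (t+2) (by omega) (by omega)
  calc Phi g t (y :: x :: L)
      = (A g t (rk y L + 1) * A g (t+1) (rk x L)) * Phi g (t+2) L := by
        rw [Phi_cons, Phi_cons, rk_cons_of_lt hxy, mul_assoc]
    _ = (A g t (rk x L) * A g (t+1) (rk y L) * g (t+1)) * Phi g (t+2) L := by
        rw [identI hg hb (by omega)]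
    _ = A g t (rk x L) * (A g (t+1) (rk y L) * (g (t+1) * Phi g (t+2) L)) := by
        simp only [mul_assoc]
    _ = A g t (rk x L) * (A g (t+1) (rk y L) * (Phi g (t+2) L * g (t+1))) := by
        rw [hcomm]
    _ = Phi g t (x :: y :: L) * g (t+1) := by
        rw [Phi_cons, Phi_cons, rk_cons_of_ge (by omega : ¬ y < x)]
        simp only [mul_assoc]



lemma countP_erase (p : ℕ → Bool) {a : ℕ} {l : List ℕ} (h : a ∈ l) :
    l.countP p = (l.erase a).countP p + (if p a then 1 else 0) := by
  have h2 := (List.perm_cons_erase h).countP_eq p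
  rw [h2, List.countP_cons]

lemma rk_range (u N : ℕ) : rk u (List.range N) = min u N := by
  induction N with
  | zero => simp [rk]
  | succ N ih =>
      rw [List.range_succ]
      simp only [rk, List.countP_append, List.countP_cons, List.countP_nil] at *
      rw [ih]
      by_cases h : N < u <;> simp [h] <;> omega

lemma rk_lt_length {u : ℕ} {U : List ℕ} (h : u ∈ U) : rk u U < U.length := by
  rcases Nat.lt_or_ge (rk u U) U.length with h' | h'
  · exact h'
  · exfalso
    have heq : rk u U = U.length := le_antisymm (List.countP_le_length) h'
    have := List.countP_eq_length.mp heq u h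
    simp at this

/-- in a strictly sorted list, the element `u` sits at index `rk u U`, and
erasing that index is erasing `u`. -/
lemma sorted_getD_rk : ∀ (U : List ℕ), U.Pairwise (· < ·) → ∀ u, u ∈ U →
    U.getD (rk u U) 0 = u ∧ U.eraseIdx (rk u U) = U.erase u := by
  intro U
  induction U with
  | nil => intro _ u hu; simp at hu
  | cons a U ih =>
      intro hs u hu
      rcases eq_or_ne a u with rfl | hne
      · have h1 : rk a U = 0 := List.countP_eq_zero.mpr (by
          intro x hx
          have := (List.pairwise_cons.mp hs).1 x hx
          simp only [decide_eq_true_eq]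
          omega)
        have h0 : rk a (a :: U) = 0 := by
          simpa [rk, List.countP_cons] using h1
        rw [h0]
        simp
      · have huU : u ∈ U := by
          rcases List.mem_cons.mp hu with h | h
          · exact absurd h.symm hne
          · exact h
        have hau : a < u := (List.pairwise_cons.mp hs).1 u huU
        have hrk : rk u (a :: U) = rk u U + 1 := by
          simp [rk, List.countP_cons, hau]
        rw [hrk]
        obtain ⟨h1, h2⟩ := ih (List.pairwise_cons.mp hs).2 u huU
        refine ⟨by simpa using h1, ?_⟩
        rw [List.eraseIdx_cons_succ, h2,
          List.erase_cons_tail (by simp only [beq_iff_eq]; omega)]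

lemma sorted_getD_lt {U : List ℕ} (hs : U.Pairwise (· < ·)) {i j : ℕ}
    (hij : i < j) (hj : j < U.length) : U.getD i 0 < U.getD j 0 := by
  rw [List.getD_eq_getElem _ _ (by omega), List.getD_eq_getElem _ _ hj]
  exact List.pairwise_iff_getElem.mp hs i j (by omega) hj hij

lemma eraseIdx_map (f : ℕ → ℕ) : ∀ (l : List ℕ) (m : ℕ),
    (l.map f).eraseIdx m = (l.eraseIdx m).map f := by
  intro l
  induction l with
  | nil => intro m; simp
  | cons a l ih =>
      intro m
      cases m with
      | zero => simp
      | succ m => simp [ih]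



lemma perm_cons_eraseIdx : ∀ (L : List ℕ) (m : ℕ), m < L.length →
    (L.getD m 0 :: L.eraseIdx m).Perm L := by
  intro L
  induction L with
  | nil => intro m h; simp at h
  | cons a L ih =>
      intro m h
      cases m with
      | zero => simp
      | succ m =>
          simp only [List.getD_cons_succ, List.eraseIdx_cons_succ]
          exact (List.Perm.swap a (L.getD m 0) (L.eraseIdx m)).trans
            ((ih m (by simpa using h)).cons a)

/-- move the element at index `m` of `L` to the front -/
lemma coreBlock (hg : BR g n) : ∀ (m : ℕ) (L : List ℕ) (t : ℕ),
    m < L.length → (∀ k, k < m → L.getD k 0 < L.getD m 0) → t + L.length ≤ n →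
    Phi g t (L.getD m 0 :: L.eraseIdx m) = Phi g t L * A g t m := by
  intro m
  induction m with
  | zero =>
      intro L t hm _ _
      cases L with
      | nil => simp at hm
      | cons x L => simp [Phi, A, mul_one]
  | succ m ih =>
      intro L t hm hk hlen
      cases L with
      | nil => simp at hm
      | cons x L =>
          simp only [List.getD_cons_succ, List.eraseIdx_cons_succ]
          have hmL : m < L.length := by simpa using hm
          have hxv : x < L.getD m 0 := hk 0 (by omega)
          have step1 : Phi g t (L.getD m 0 :: x :: L.eraseIdx m)
              = Phi g t (x :: L.getD m 0 :: L.eraseIdx m) * g (t+1) := by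
            apply swapHead hg hxv
            have : (L.eraseIdx m).length = L.length - 1 := by
              simp [List.length_eraseIdx, hmL]
            simp at hlen
            omega
          rw [step1, Phi_cons,
            rk_perm x (perm_cons_eraseIdx L m hmL),
            ih L (t+1) hmL (fun k hkm => hk (k+1) (by omega)) (by simp at hlen; omega),
            Phi_cons t x L, A_split g t m]
          simp only [mul_assoc]

lemma peelBlock (hg : BR g n) : ∀ (F : List ℕ) (R : List ℕ) (m t : ℕ),
    m < R.length → (∀ k, k < m → R.getD k 0 < R.getD m 0) →
    t + F.length + R.length ≤ n →
    Phi g t (F ++ (R.getD m 0 :: R.eraseIdx m)) = Phi g t (F ++ R) * A g (t + F.length) m := by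
  intro F
  induction F with
  | nil =>
      intro R m t h1 h2 h3
      simpa using coreBlock hg m R t h1 h2 (by simpa using h3)
  | cons a F ih =>
      intro R m t h1 h2 h3
      simp only [List.cons_append, Phi_cons]
      have hperm : (F ++ (R.getD m 0 :: R.eraseIdx m)).Perm (F ++ R) :=
        List.Perm.append_left F (perm_cons_eraseIdx R m h1)
      rw [rk_perm a hperm, ih R m (t+1) h1 h2 (by simp at h3 ⊢; omega)]
      simp only [List.length_cons, mul_assoc]
      congr 2
      congr 1
      omega

/-- process a list of (relative) picks -/
def process : List ℕ → List ℕ → List ℕ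
  | [], R => R
  | m :: P, R => R.getD m 0 :: process P (R.eraseIdx m)

def Valid : List ℕ → List ℕ → Prop
  | [], _ => True
  | m :: P, R => m < R.length ∧ (∀ k, k < m → R.getD k 0 < R.getD m 0) ∧
      Valid P (R.eraseIdx m)

def W (g : ℕ → M) : ℕ → List ℕ → M
  | _, [] => 1
  | t, m :: P => A g t m * W g (t+1) P

lemma process_perm : ∀ (P R : List ℕ), Valid P R → (process P R).Perm R := by
  intro P
  induction P with
  | nil => intro R _; exact List.Perm.refl R
  | cons m P ih =>
      intro R hV
      obtain ⟨h1, _, h3⟩ := hV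
      exact ((ih _ h3).cons _).trans (perm_cons_eraseIdx R m h1)

lemma process_length (P R : List ℕ) (h : Valid P R) :
    (process P R).length = R.length := (process_perm P R h).length_eq

lemma run (hg : BR g n) : ∀ (P : List ℕ) (F R : List ℕ) (t : ℕ), Valid P R →
    t + F.length + R.length ≤ n →
    Phi g t (F ++ process P R) = Phi g t (F ++ R) * W g (t + F.length) P := by
  intro P
  induction P with
  | nil => intro F R t _ _; simp [process, W]
  | cons m P ih =>
      intro F R t hV hlen
      obtain ⟨h1, h2, h3⟩ := hV
      have e1 : F ++ process (m :: P) R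
          = (F ++ [R.getD m 0]) ++ process P (R.eraseIdx m) := by
        simp [process]
      rw [e1, ih (F ++ [R.getD m 0]) (R.eraseIdx m) t h3
        (by simp [List.length_eraseIdx, h1] at hlen ⊢; omega)]
      have e2 : (F ++ [R.getD m 0]) ++ R.eraseIdx m = F ++ (R.getD m 0 :: R.eraseIdx m) := by
        simp
      rw [e2, peelBlock hg F R m t h1 h2 hlen]
      show _ = _ * (A g (t + F.length) m * W g (t + F.length + 1) P)
      simp only [List.length_append, List.length_cons, List.length_nil, mul_assoc,
        Nat.add_assoc]



section UC

variable (τ : ℕ → ℕ) (N : ℕ)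

/-- remaining values after extracting `τ 0, …, τ (i-1)` from `range N`. -/
def UC : ℕ → List ℕ
  | 0 => List.range N
  | i+1 => (UC i).erase (τ i)

lemma UC_sublist : ∀ i, (UC τ N i).Sublist (List.range N) := by
  intro i
  induction i with
  | zero => exact List.Sublist.refl _
  | succ i ih => exact List.erase_sublist.trans ih

lemma UC_nodup (i : ℕ) : (UC τ N i).Nodup := (UC_sublist τ N i).nodup List.nodup_range

lemma UC_sorted (i : ℕ) : (UC τ N i).Pairwise (· < ·) :=
  List.Pairwise.sublist (UC_sublist τ N i) List.pairwise_lt_range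

variable {τ N}
variable (hinj : ∀ i j, i < N → j < N → τ i = τ j → i = j)
         (hlt : ∀ i, i < N → τ i < N)

lemma UC_mem : ∀ i v, i ≤ N → (v ∈ UC τ N i ↔ v < N ∧ ∀ j, j < i → τ j ≠ v) := by
  intro i
  induction i with
  | zero => intro v _; simp [UC, List.mem_range]
  | succ i ih =>
      intro v hi
      rw [UC, (UC_nodup τ N i).mem_erase_iff, ih v (by omega)]
      constructor
      · rintro ⟨hne, hvN, hj⟩
        refine ⟨hvN, fun j hj1 => ?_⟩
        rcases Nat.lt_or_ge j i with h | h
        · exact hj j h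
        · have : j = i := by omega
          subst this
          exact fun h => hne h.symm
      · rintro ⟨hvN, hj⟩
        exact ⟨fun h => hj i (by omega) h.symm, hvN, fun j hj1 => hj j (by omega)⟩

include hinj hlt in
lemma UC_mem_self {i : ℕ} (hi : i < N) : τ i ∈ UC τ N i := by
  rw [UC_mem i (τ i) (by omega)]
  exact ⟨hlt i hi, fun j hj h => by have := hinj j i (by omega) hi h; omega⟩

include hinj hlt in
lemma UC_length : ∀ i, i ≤ N → (UC τ N i).length = N - i := by
  intro i
  induction i with
  | zero => simp [UC]
  | succ i ih =>
      intro hi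
      rw [UC, List.length_erase_of_mem (UC_mem_self hinj hlt (by omega)), ih (by omega)]
      omega

include hinj hlt in
/-- the rank of `τ i` in `UC i`, assuming `τ` is increasing on `[0, i]`. -/
lemma UC_rk {i : ℕ} (hi : i < N) (hmono : ∀ j, j < i → τ j < τ i) :
    rk (τ i) (UC τ N i) = τ i - i := by
  have key : ∀ j, j ≤ i → rk (τ i) (UC τ N j) = τ i - j := by
    intro j
    induction j with
    | zero => intro _; simpa [UC, rk_range] using by have := hlt i hi; omega
    | succ j ihj =>
        intro hj
        have hmem : τ j ∈ UC τ N j := UC_mem_self hinj hlt (by omega)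
        have := countP_erase (fun x => decide (x < τ i)) hmem
        have hji : τ j < τ i := hmono j (by omega)
        rw [UC]
        have h2 := ihj (by omega)
        simp only [rk] at *
        rw [if_pos (by simpa using hji)] at this
        have hij : i - j ≥ 1 := by
          have := hmono j (by omega)
          have : j < i := by omega
          omega
        omega
  exact key i (le_refl i)

end UC

section SR

variable {τ f : ℕ → ℕ} {N rr : ℕ} (T : List ℕ)
variable (hinj : ∀ i j, i < N → j < N → τ i = τ j → i = j)
         (hlt : ∀ i, i < N → τ i < N)
         (hmono1 : ∀ i j, i < j → j < rr → τ i < τ j)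
         (hrr : rr ≤ N)
         (hf : ∀ i j, i < j → j < N → f i < f j)

/-- the picks for blocks `i, i+1, …, i+k-1`. -/
def picksFrom (τ : ℕ → ℕ) (i k : ℕ) : List ℕ :=
  (List.range k).map (fun j => τ (i+j) - (i+j))

include hinj hlt hmono1 hrr hf in
lemma shuffle_run_claim : ∀ k i, i + k = rr →
    Valid (picksFrom τ i k) ((UC τ N i).map f ++ T) ∧
    process (picksFrom τ i k) ((UC τ N i).map f ++ T)
      = (List.range k).map (fun j => f (τ (i+j))) ++ ((UC τ N rr).map f ++ T) := by
  intro k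
  induction k with
  | zero =>
      intro i hi
      have : i = rr := by omega
      subst this
      simp [picksFrom, Valid, process]
  | succ k ih =>
      intro i hik
      have hiN : i < N := by omega
      have hirr : i < rr := by omega
      have hti : τ i ∈ UC τ N i := UC_mem_self hinj hlt hiN
      have hrk : rk (τ i) (UC τ N i) = τ i - i :=
        UC_rk hinj hlt hiN (fun j hj => hmono1 j i hj hirr)
      have hmlt : τ i - i < (UC τ N i).length := by
        rw [← hrk]; exact rk_lt_length hti
      have hsge := sorted_getD_rk (UC τ N i) (UC_sorted τ N i) (τ i) hti
      have hget : (UC τ N i).getD (τ i - i) 0 = τ i := by rw [← hrk]; exact hsge.1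
      have herase : (UC τ N i).eraseIdx (τ i - i) = UC τ N (i+1) := by
        rw [← hrk, hsge.2]; rfl
      have hpicks : picksFrom τ i (k+1) = (τ i - i) :: picksFrom τ (i+1) k := by
        rw [picksFrom, List.range_succ_eq_map, List.map_cons, List.map_map]
        simp only [Nat.add_zero]
        congr 1
        apply List.map_congr_left
        intro j _
        simp only [Function.comp_apply, Nat.succ_eq_add_one]
        rw [show i + (j+1) = i+1+j by omega]
      set R := (UC τ N i).map f ++ T with hR
      have hmltR : τ i - i < R.length := by
        rw [hR]
        simp only [List.length_append, List.length_map]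
        omega
      have hgetR : R.getD (τ i - i) 0 = f (τ i) := by
        rw [hR, List.getD_append _ _ _ _ (by simpa using hmlt),
          List.getD_eq_getElem _ _ (by simpa using hmlt), List.getElem_map]
        congr 1
        rw [← List.getD_eq_getElem _ 0 hmlt]
        exact hget
      have heraseR : R.eraseIdx (τ i - i) = (UC τ N (i+1)).map f ++ T := by
        rw [hR, List.eraseIdx_append_of_lt_length (by simpa using hmlt),
          eraseIdx_map, herase]
      have hmemN : ∀ x ∈ UC τ N i, x < N := by
        intro x hx
        have := (UC_sublist τ N i).subset hx
        simpa using this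
      have hcond : ∀ k', k' < τ i - i → R.getD k' 0 < R.getD (τ i - i) 0 := by
        intro k' hk'
        rw [hgetR, hR, List.getD_append _ _ _ _ (by simp; omega),
          List.getD_eq_getElem _ _ (by simp; omega), List.getElem_map]
        apply hf _ _ _ (hlt i hiN)
        have h1 : (UC τ N i).getD k' 0 < (UC τ N i).getD (τ i - i) 0 :=
          sorted_getD_lt (UC_sorted τ N i) hk' hmlt
        rw [hget] at h1
        rw [← List.getD_eq_getElem _ 0 (by omega)]
        exact h1
      obtain ⟨ihV, ihP⟩ := ih (i+1) (by omega)
      constructor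
      · rw [hpicks]
        refine ⟨hmltR, hcond, ?_⟩
        rw [heraseR]
        exact ihV
      · rw [hpicks]
        show R.getD (τ i - i) 0 :: process (picksFrom τ (i+1) k) (R.eraseIdx (τ i - i)) = _
        rw [hgetR, heraseR, ihP]
        rw [List.range_succ_eq_map, List.map_cons, List.map_map]
        simp only [Nat.add_zero, List.cons_append]
        congr 2
        apply List.map_congr_left
        intro j _
        simp only [Function.comp_apply, Nat.succ_eq_add_one]
        rw [show i + (j+1) = i+1+j by omega]

include hinj hlt in
lemma UC_final (hsurj : ∀ v, v < N → ∃ i, i < N ∧ τ i = v)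
    (hmono2 : ∀ i j, rr ≤ i → i < j → j < N → τ i < τ j) (hrr : rr ≤ N) :
    UC τ N rr = (List.range (N - rr)).map (fun j => τ (rr + j)) := by
  have hnodup2 : ((List.range (N - rr)).map (fun j => τ (rr + j))).Nodup := by
    refine List.Nodup.map_on ?_ List.nodup_range
    intro x hx y hy hxy
    simp only [List.mem_range] at hx hy
    have := hinj (rr+x) (rr+y) (by omega) (by omega) hxy
    omega
  have hperm : (UC τ N rr).Perm ((List.range (N - rr)).map (fun j => τ (rr + j))) := by
    rw [List.perm_ext_iff_of_nodup (UC_nodup τ N rr) hnodup2]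
    intro v
    rw [UC_mem rr v hrr]
    constructor
    · rintro ⟨hvN, hj⟩
      obtain ⟨i, hiN, hiv⟩ := hsurj v hvN
      have hirr : rr ≤ i := by
        by_contra h
        exact hj i (by omega) hiv
      refine List.mem_map.mpr ⟨i - rr, by simp [List.mem_range]; omega, ?_⟩
      rw [show rr + (i - rr) = i by omega]
      exact hiv
    · intro hv
      obtain ⟨j, hj, hjv⟩ := List.mem_map.mp hv
      simp only [List.mem_range] at hj
      subst hjv
      refine ⟨hlt _ (by omega), fun j' hj' h => ?_⟩
      have := hinj j' (rr + j) (by omega) (by omega) h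
      omega
  have hsorted2 : ((List.range (N - rr)).map (fun j => τ (rr + j))).Pairwise (· < ·) := by
    rw [List.pairwise_iff_getElem]
    intro a b ha hb hab
    simp only [List.getElem_map, List.getElem_range]
    simp only [List.length_map, List.length_range] at ha hb
    exact hmono2 (rr+a) (rr+b) (by omega) (by omega) (by omega)
  exact List.Perm.eq_of_pairwise'
    ((UC_sorted τ N rr).imp le_of_lt) (hsorted2.imp le_of_lt) hperm

end SR


lemma monoEnumEq (k : ℕ) (S : Finset ℕ) (hS : S.card = k) (f1 f2 : ℕ → ℕ)
    (h1m : ∀ i j, i < j → j < k → f1 i < f1 j) (h1S : ∀ i, i < k → f1 i ∈ S)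
    (h2m : ∀ i j, i < j → j < k → f2 i < f2 j) (h2S : ∀ i, i < k → f2 i ∈ S) :
    ∀ i, i < k → f1 i = f2 i := by
  intro i hi
  have e1 : (fun x : Fin k => f1 x.val) = S.orderEmbOfFin hS :=
    Finset.orderEmbOfFin_unique hS (fun x => h1S x.val x.isLt)
      (fun a b hab => h1m a b hab b.isLt)
  have e2 : (fun x : Fin k => f2 x.val) = S.orderEmbOfFin hS :=
    Finset.orderEmbOfFin_unique hS (fun x => h2S x.val x.isLt)
      (fun a b hab => h2m a b hab b.isLt)
  have := congrFun (e1.trans e2.symm) ⟨i, hi⟩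
  simpa using this



/- ===================== glue ===================== -/

lemma Phi_sorted_one : ∀ (L : List ℕ), L.Pairwise (· ≤ ·) → ∀ t, Phi g t L = 1 := by
  intro L
  induction L with
  | nil => intro _ t; rfl
  | cons v L ih =>
      intro hs t
      have h0 : rk v L = 0 := List.countP_eq_zero.mpr (by
        intro x hx
        have := (List.pairwise_cons.mp hs).1 x hx
        simp only [decide_eq_true_eq]
        omega)
      rw [Phi_cons, h0, A_zero, one_mul, ih (List.pairwise_cons.mp hs).2]

lemma Phi_range_one (N t : ℕ) : Phi g t (List.range N) = 1 :=
  Phi_sorted_one (List.range N) (List.pairwise_lt_range.imp le_of_lt) t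

lemma br_eq_A (g : ℕ → M) (t c : ℕ) : BraidMonoid.br g (t+1) (t+1+c) = A g t c := by
  rw [BraidMonoid.br, if_pos (by omega), show t+1+c-(t+1) = c by omega]
  induction c with
  | zero => simp
  | succ c ih =>
      rw [List.range_succ, List.map_append, List.reverse_append]
      simp only [List.map_cons, List.map_nil, List.reverse_cons, List.reverse_nil,
        List.nil_append, List.singleton_append, List.prod_cons]
      rw [ih, A_succ, show t+1+c = t+c+1 by omega]

lemma W_nil (t : ℕ) : W g t [] = 1 := rfl
lemma W_cons (t m : ℕ) (P : List ℕ) : W g t (m :: P) = A g t m * W g (t+1) P := rfl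

lemma W_map_range : ∀ (k t : ℕ) (F : ℕ → ℕ),
    W g t ((List.range k).map F) = ((List.range k).map (fun i => A g (t+i) (F i))).prod := by
  intro k
  induction k with
  | zero => intro t F; simp [W]
  | succ k ih =>
      intro t F
      rw [List.range_succ_eq_map, List.map_cons, List.map_cons, List.map_map,
        List.map_map, List.prod_cons, W_cons, ih (t+1) (F ∘ Nat.succ)]
      congr 1
      congr 1
      apply List.map_congr_left
      intro j _
      simp only [Function.comp_apply, Nat.succ_eq_add_one]
      rw [show t+1+j = t+(j+1) by omega]

/-- value of a permutation of `Fin N` on naturals -/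
def pv {N : ℕ} (π : Equiv.Perm (Fin N)) (x : ℕ) : ℕ :=
  if h : x < N then (π ⟨x, h⟩ : Fin N).val else x

lemma pv_eq {N : ℕ} (π : Equiv.Perm (Fin N)) {x : ℕ} (h : x < N) :
    pv π x = (π ⟨x, h⟩ : Fin N).val := dif_pos h

lemma pv_lt {N : ℕ} (π : Equiv.Perm (Fin N)) : ∀ x, x < N → pv π x < N := by
  intro x h
  rw [pv_eq π h]
  exact (π ⟨x, h⟩).isLt

lemma pv_inj {N : ℕ} (π : Equiv.Perm (Fin N)) :
    ∀ i j, i < N → j < N → pv π i = pv π j → i = j := by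
  intro i j hi hj h
  rw [pv_eq π hi, pv_eq π hj] at h
  have := π.injective (Fin.val_injective h)
  simpa using congrArg Fin.val this

lemma pv_surj {N : ℕ} (π : Equiv.Perm (Fin N)) :
    ∀ v, v < N → ∃ i, i < N ∧ pv π i = v := by
  intro v hv
  refine ⟨(π.symm ⟨v, hv⟩).val, (π.symm ⟨v, hv⟩).isLt, ?_⟩
  rw [pv_eq π (π.symm ⟨v, hv⟩).isLt]
  simp

lemma pv_mono1 {N r : ℕ} {π : Equiv.Perm (Fin N)} (hsh : BraidMonoid.IsShuffle N r π)
    (hrN : r ≤ N) : ∀ i j, i < j → j < r → pv π i < pv π j := by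
  intro i j hij hj
  have hiN : i < N := by omega
  have hjN : j < N := by omega
  rw [pv_eq π hiN, pv_eq π hjN]
  exact hsh.1 ⟨i, hiN⟩ ⟨j, hjN⟩ (by simpa using hij) (by simpa using hj)

lemma pv_mono2 {N r : ℕ} {π : Equiv.Perm (Fin N)} (hsh : BraidMonoid.IsShuffle N r π) :
    ∀ i j, r ≤ i → i < j → j < N → pv π i < pv π j := by
  intro i j hri hij hj
  have hiN : i < N := by omega
  rw [pv_eq π hiN, pv_eq π hj]
  exact hsh.2 ⟨i, hiN⟩ ⟨j, hj⟩ (by simpa using hij) (by simpa using hri)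

lemma pv_ge {N r : ℕ} {π : Equiv.Perm (Fin N)} (hsh : BraidMonoid.IsShuffle N r π)
    (hrN : r ≤ N) : ∀ i, i < r → i ≤ pv π i := by
  intro i
  induction i with
  | zero => intro _; omega
  | succ i ih =>
      intro hi
      have h1 : pv π i < pv π (i+1) := pv_mono1 hsh hrN i (i+1) (by omega) hi
      have h2 : i ≤ pv π i := ih (by omega)
      omega

lemma brShuffleShift_eq_W {N r : ℕ} (π : Equiv.Perm (Fin N))
    (hsh : BraidMonoid.IsShuffle N r π) (hrN : r ≤ N) (t : ℕ) :
    BraidMonoid.brShuffleShift g t N r π = W g t (picksFrom (pv π) 0 r) := by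
  have hlist : ((List.finRange N).take r).map
        (fun (i : Fin N) => BraidMonoid.br g (t + (i : ℕ) + 1) (t + (π i : ℕ) + 1))
      = (List.range r).map (fun i => A g (t+i) (pv π i - i)) := by
    apply List.ext_getElem
    · simp only [List.length_map, List.length_take, List.length_finRange,
        List.length_range]
      omega
    · intro i h1 h2
      simp only [List.getElem_map, List.getElem_take, List.getElem_finRange,
        List.getElem_range]
      simp only [List.length_map, List.length_take, List.length_finRange] at h1
      have hir : i < r := by omega
      have hiN : i < N := by omega
      have hge : i ≤ pv π i := pv_ge hsh hrN i hir
      have hpv : pv π i = (π ⟨i, hiN⟩ : Fin N).val := pv_eq π hiN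
      have e1 : (Fin.cast (List.length_finRange (n := N))
          (⟨i, by simp only [List.length_finRange]; omega⟩ : Fin ((List.finRange N).length)))
          = (⟨i, hiN⟩ : Fin N) := by
        ext; simp
      rw [e1]
      rw [show t + ((⟨i, hiN⟩ : Fin N) : ℕ) + 1 = (t+i)+1 from rfl,
        show t + ((π ⟨i, hiN⟩ : Fin N) : ℕ) + 1 = ((t+i)+1) + (pv π i - i) by
          rw [hpv] at hge ⊢; omega]
      exact br_eq_A g (t+i) _
  rw [BraidMonoid.brShuffleShift, hlist, picksFrom, W_map_range]
  congr 1
  apply List.map_congr_left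
  intro j _
  rw [show (0:ℕ)+j = j from by omega]

/-- packaged run of a shuffle over a two-block list -/
lemma run_shuffle (hB : BR g n) {τ f : ℕ → ℕ} {N rr : ℕ} (F T : List ℕ)
    (hinj : ∀ i j, i < N → j < N → τ i = τ j → i = j)
    (hlt : ∀ i, i < N → τ i < N)
    (hmono1 : ∀ i j, i < j → j < rr → τ i < τ j)
    (hrr : rr ≤ N)
    (hf : ∀ i j, i < j → j < N → f i < f j)
    (hsurj : ∀ v, v < N → ∃ i, i < N ∧ τ i = v)
    (hmono2 : ∀ i j, rr ≤ i → i < j → j < N → τ i < τ j)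
    (hlen : F.length + N + T.length ≤ n) :
    Phi g 0 (F ++ ((List.range rr).map (fun j => f (τ j))
        ++ ((List.range (N-rr)).map (fun j => f (τ (rr+j))) ++ T)))
      = Phi g 0 (F ++ ((List.range N).map (fun x => f x) ++ T))
          * W g (F.length) (picksFrom τ 0 rr) := by
  have h1 := shuffle_run_claim T hinj hlt hmono1 hrr hf rr 0 (by omega)
  have hU0 : UC τ N 0 = List.range N := rfl
  have hUf : UC τ N rr = (List.range (N-rr)).map (fun j => τ (rr+j)) :=
    UC_final hinj hlt hsurj hmono2 hrr
  have e := run hB (picksFrom τ 0 rr) F ((UC τ N 0).map f ++ T) 0 h1.1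
    (by simp only [List.length_append, List.length_map, hU0, List.length_range]; omega)
  rw [h1.2] at e
  rw [hU0, hUf] at e
  simp only [zero_add, List.map_map, Function.comp] at e
  exact e



end Stmt7Aux

open BraidMonoid in
/-- the key combinatorial identity in the proof of Lemma 5.2: let
`{1,…,n} = α ⊔ β ⊔ γ` with `|α| = r`, `|β| = s`, `|γ| = t`.  Let `π ∈ Sh_n^{r+s}` pick out
`α ∪ β`, let `σ ∈ Sh_{r+s}^r` pick out the positions of `α` inside the listing of `α ∪ β`,
let `θ ∈ Sh_n^r` pick out `α`, and let `δ ∈ Sh_{s+t}^s` pick out the positions `j` with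
`θ(r+j) ∈ β`.  Then `[π][σ] = [θ][δ]_{(r)}`. -/
theorem stmt7 {M : Type*} [Monoid M] (n : ℕ) (g : ℕ → M) (hg : BraidRels g n)
    (r s t : ℕ) (hn : r + s + t = n)
    (α β γ : Finset (Fin n))
    (hab : Disjoint α β) (hag : Disjoint α γ) (hbg : Disjoint β γ)
    (hcover : α ∪ β ∪ γ = Finset.univ)
    (hα : α.card = r) (hβ : β.card = s) (hγ : γ.card = t)
    (π : Equiv.Perm (Fin n)) (hπsh : IsShuffle n (r + s) π)
    (hπ : ∀ i : Fin n, (i : ℕ) < r + s ↔ π i ∈ α ∪ β)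
    (σ : Equiv.Perm (Fin (r + s))) (hσsh : IsShuffle (r + s) r σ)
    (hσ : ∀ i : Fin (r + s), (i : ℕ) < r ↔
      π (Fin.castLE (le_of_le_of_eq (Nat.le_add_right (r + s) t) hn) (σ i)) ∈ α)
    (θ : Equiv.Perm (Fin n)) (hθsh : IsShuffle n r θ)
    (hθ : ∀ i : Fin n, (i : ℕ) < r ↔ θ i ∈ α)
    (δ : Equiv.Perm (Fin (s + t))) (hδsh : IsShuffle (s + t) s δ)
    (hδ : ∀ j : Fin (s + t), (j : ℕ) < s ↔
      θ ⟨r + (δ j : ℕ), lt_of_lt_of_le (Nat.add_lt_add_left (δ j).isLt r)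
        (le_of_eq ((Nat.add_assoc r s t).symm.trans hn))⟩ ∈ β) :
    brShuffle g n (r + s) π * brShuffle g (r + s) r σ
      = brShuffle g n r θ * brShuffleShift g r (s + t) s δ := by
    classical
  obtain ⟨hg1, hg2⟩ := hg
  have hB : Stmt7Aux.BR g n := ⟨hg1, hg2⟩
  have hrsn : r + s ≤ n := by omega
  have hrn : r ≤ n := by omega
  -- ℕ-level facts for the four permutations
  have hπlt := Stmt7Aux.pv_lt π
  have hπinj := Stmt7Aux.pv_inj π
  have hπsurj := Stmt7Aux.pv_surj π
  have hπm1 := Stmt7Aux.pv_mono1 hπsh hrsn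
  have hπm2 := Stmt7Aux.pv_mono2 hπsh
  have hσlt := Stmt7Aux.pv_lt σ
  have hσinj := Stmt7Aux.pv_inj σ
  have hσsurj := Stmt7Aux.pv_surj σ
  have hσm1 := Stmt7Aux.pv_mono1 hσsh (by omega : r ≤ r + s)
  have hσm2 := Stmt7Aux.pv_mono2 hσsh
  have hθlt := Stmt7Aux.pv_lt θ
  have hθinj := Stmt7Aux.pv_inj θ
  have hθsurj := Stmt7Aux.pv_surj θ
  have hθm1 := Stmt7Aux.pv_mono1 hθsh hrn
  have hθm2 := Stmt7Aux.pv_mono2 hθsh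
  have hδlt := Stmt7Aux.pv_lt δ
  have hδinj := Stmt7Aux.pv_inj δ
  have hδsurj := Stmt7Aux.pv_surj δ
  have hδm1 := Stmt7Aux.pv_mono1 hδsh (by omega : s ≤ s + t)
  have hδm2 := Stmt7Aux.pv_mono2 hδsh
  -- the four runs
  have key1 := Stmt7Aux.run_shuffle hB (τ := Stmt7Aux.pv π) (f := fun x => x)
      (N := n) (rr := r+s) [] [] hπinj hπlt hπm1 hrsn (fun i j hij _ => hij)
      hπsurj hπm2 (by simp)
  have key2 := Stmt7Aux.run_shuffle hB (τ := Stmt7Aux.pv σ) (f := Stmt7Aux.pv π)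
      (N := r+s) (rr := r) []
      ((List.range (n-(r+s))).map (fun j => Stmt7Aux.pv π ((r+s)+j)))
      hσinj hσlt hσm1 (by omega) hπm1 hσsurj hσm2
      (by simp only [List.length_nil, List.length_map, List.length_range]; omega)
  have key3 := Stmt7Aux.run_shuffle hB (τ := Stmt7Aux.pv θ) (f := fun x => x)
      (N := n) (rr := r) [] [] hθinj hθlt hθm1 hrn (fun i j hij _ => hij)
      hθsurj hθm2 (by simp)
  have key4 := Stmt7Aux.run_shuffle hB (τ := Stmt7Aux.pv δ)
      (f := fun x => Stmt7Aux.pv θ (r + x)) (N := s+t) (rr := s)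
      ((List.range r).map (fun j => Stmt7Aux.pv θ j)) []
      hδinj hδlt hδm1 (by omega)
      (fun i j hij hj => hθm2 (r+i) (r+j) (by omega) (by omega) (by omega))
      hδsurj hδm2
      (by simp only [List.length_nil, List.length_map, List.length_range]; omega)
  beta_reduce at key1 key2 key3 key4
  simp only [List.nil_append, List.append_nil, List.map_id', List.length_map,
    List.length_range, List.length_nil, Nat.add_sub_cancel_left] at key1 key2 key3 key4
  rw [show n - (r+s) = t from by omega] at key1 key2
  rw [show n - r = s + t from by omega] at key3
  rw [Stmt7Aux.Phi_range_one n 0, one_mul] at key1 key3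
  rw [key1] at key2
  rw [key3] at key4
  -- the three segment identities
  have cardA : (α.image Fin.val).card = r := by
    rw [Finset.card_image_of_injective _ Fin.val_injective, hα]
  have cardB : (β.image Fin.val).card = s := by
    rw [Finset.card_image_of_injective _ Fin.val_injective, hβ]
  have cardC : (γ.image Fin.val).card = t := by
    rw [Finset.card_image_of_injective _ Fin.val_injective, hγ]
  have seg1 : ∀ j, j < r → Stmt7Aux.pv π (Stmt7Aux.pv σ j) = Stmt7Aux.pv θ j := by
    refine Stmt7Aux.monoEnumEq r (α.image Fin.val) cardA _ _
      (fun i j hij hj => hπm1 _ _ (hσm1 i j hij hj) (hσlt j (by omega))) ?_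
      (fun i j hij hj => hθm1 i j hij hj) ?_
    · intro j hj
      have hj2 : j < r + s := by omega
      have hlt2 : Stmt7Aux.pv σ j < n := by have := hσlt j hj2; omega
      rw [Stmt7Aux.pv_eq π hlt2]
      have h := (hσ ⟨j, hj2⟩).mp (by simpa using hj)
      have earg : (⟨Stmt7Aux.pv σ j, hlt2⟩ : Fin n)
          = Fin.castLE (le_of_le_of_eq (Nat.le_add_right (r + s) t) hn) (σ ⟨j, hj2⟩) := by
        apply Fin.ext
        exact Stmt7Aux.pv_eq σ hj2
      rw [earg]
      exact Finset.mem_image_of_mem _ h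
    · intro j hj
      have hjn : j < n := by omega
      rw [Stmt7Aux.pv_eq θ hjn]
      exact Finset.mem_image_of_mem _ ((hθ ⟨j, hjn⟩).mp (by simpa using hj))
  have seg2 : ∀ j, j < s →
      Stmt7Aux.pv π (Stmt7Aux.pv σ (r+j)) = Stmt7Aux.pv θ (r + Stmt7Aux.pv δ j) := by
    refine Stmt7Aux.monoEnumEq s (β.image Fin.val) cardB _ _
      (fun i j hij hj => hπm1 _ _ (hσm2 (r+i) (r+j) (by omega) (by omega) (by omega))
        (hσlt (r+j) (by omega))) ?_
      (fun i j hij hj => hθm2 (r + Stmt7Aux.pv δ i) (r + Stmt7Aux.pv δ j) (by omega)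
        (by have := hδm1 i j hij hj; omega)
        (by have := hδlt j (by omega); omega)) ?_
    · intro j hj
      have hj2 : r + j < r + s := by omega
      have hlt2 : Stmt7Aux.pv σ (r+j) < n := by have := hσlt (r+j) hj2; omega
      rw [Stmt7Aux.pv_eq π hlt2]
      have hmemU : π ⟨Stmt7Aux.pv σ (r+j), hlt2⟩ ∈ α ∪ β := by
        apply (hπ ⟨Stmt7Aux.pv σ (r+j), hlt2⟩).mp
        simpa using hσlt (r+j) hj2
      have hnotA : π ⟨Stmt7Aux.pv σ (r+j), hlt2⟩ ∉ α := by
        intro hmem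
        have earg : (⟨Stmt7Aux.pv σ (r+j), hlt2⟩ : Fin n)
            = Fin.castLE (le_of_le_of_eq (Nat.le_add_right (r + s) t) hn) (σ ⟨r+j, hj2⟩) := by
          apply Fin.ext
          exact Stmt7Aux.pv_eq σ hj2
        rw [earg] at hmem
        have := (hσ ⟨r+j, hj2⟩).mpr hmem
        simp at this
      exact Finset.mem_image_of_mem _ ((Finset.mem_union.mp hmemU).resolve_left hnotA)
    · intro j hj
      have hjst : j < s + t := by omega
      have hdlt : Stmt7Aux.pv δ j < s + t := hδlt j hjst
      have hltn : r + Stmt7Aux.pv δ j < n := by omega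
      rw [Stmt7Aux.pv_eq θ hltn]
      have h := (hδ ⟨j, hjst⟩).mp (by simpa using hj)
      have earg : (⟨r + Stmt7Aux.pv δ j, hltn⟩ : Fin n)
          = ⟨r + ((δ ⟨j, hjst⟩ : Fin (s+t)) : ℕ), lt_of_lt_of_le
              (Nat.add_lt_add_left (δ ⟨j, hjst⟩).isLt r)
              (le_of_eq ((Nat.add_assoc r s t).symm.trans hn))⟩ := by
        apply Fin.ext
        show r + Stmt7Aux.pv δ j = r + ((δ ⟨j, hjst⟩ : Fin (s+t)) : ℕ)
        rw [Stmt7Aux.pv_eq δ hjst]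
      rw [earg]
      exact Finset.mem_image_of_mem _ h
  have seg3 : ∀ j, j < t →
      Stmt7Aux.pv π ((r+s)+j) = Stmt7Aux.pv θ (r + Stmt7Aux.pv δ (s+j)) := by
    refine Stmt7Aux.monoEnumEq t (γ.image Fin.val) cardC _ _
      (fun i j hij hj => hπm2 ((r+s)+i) ((r+s)+j) (by omega) (by omega) (by omega)) ?_
      (fun i j hij hj => hθm2 (r + Stmt7Aux.pv δ (s+i)) (r + Stmt7Aux.pv δ (s+j)) (by omega)
        (by have := hδm2 (s+i) (s+j) (by omega) (by omega) (by omega); omega)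
        (by have := hδlt (s+j) (by omega); omega)) ?_
    · intro j hj
      have hjn : (r+s)+j < n := by omega
      rw [Stmt7Aux.pv_eq π hjn]
      have hnotU : π ⟨(r+s)+j, hjn⟩ ∉ α ∪ β := by
        intro hmem
        have := (hπ ⟨(r+s)+j, hjn⟩).mpr hmem
        simp at this
      have hmemC : π ⟨(r+s)+j, hjn⟩ ∈ γ := by
        have hU : π ⟨(r+s)+j, hjn⟩ ∈ α ∪ β ∪ γ := by
          rw [hcover]; exact Finset.mem_univ _
        exact (Finset.mem_union.mp hU).resolve_left hnotU
      exact Finset.mem_image_of_mem _ hmemC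
    · intro j hj
      have hjst : s + j < s + t := by omega
      have hdlt : Stmt7Aux.pv δ (s+j) < s + t := hδlt (s+j) hjst
      have hltn : r + Stmt7Aux.pv δ (s+j) < n := by omega
      rw [Stmt7Aux.pv_eq θ hltn]
      have hnotB : θ ⟨r + Stmt7Aux.pv δ (s+j), hltn⟩ ∉ β := by
        intro hmem
        have earg : (⟨r + Stmt7Aux.pv δ (s+j), hltn⟩ : Fin n)
            = ⟨r + ((δ ⟨s+j, hjst⟩ : Fin (s+t)) : ℕ), lt_of_lt_of_le
                (Nat.add_lt_add_left (δ ⟨s+j, hjst⟩).isLt r)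
                (le_of_eq ((Nat.add_assoc r s t).symm.trans hn))⟩ := by
          apply Fin.ext
          show r + Stmt7Aux.pv δ (s+j) = r + ((δ ⟨s+j, hjst⟩ : Fin (s+t)) : ℕ)
          rw [Stmt7Aux.pv_eq δ hjst]
        rw [earg] at hmem
        have := (hδ ⟨s+j, hjst⟩).mpr hmem
        simp at this
      have hnotA : θ ⟨r + Stmt7Aux.pv δ (s+j), hltn⟩ ∉ α := by
        intro hmem
        have := (hθ ⟨r + Stmt7Aux.pv δ (s+j), hltn⟩).mpr hmem
        simp at this
      have hU : θ ⟨r + Stmt7Aux.pv δ (s+j), hltn⟩ ∈ α ∪ β ∪ γ := by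
        rw [hcover]; exact Finset.mem_univ _
      rcases Finset.mem_union.mp hU with hU' | hC
      · rcases Finset.mem_union.mp hU' with h' | h'
        · exact absurd h' hnotA
        · exact absurd h' hnotB
      · exact Finset.mem_image_of_mem _ hC
  -- the two final lists coincide
  have hfinal : (List.range r).map (fun j => Stmt7Aux.pv π (Stmt7Aux.pv σ j))
        ++ ((List.range s).map (fun j => Stmt7Aux.pv π (Stmt7Aux.pv σ (r+j)))
          ++ (List.range t).map (fun j => Stmt7Aux.pv π ((r+s)+j)))
      = (List.range r).map (fun j => Stmt7Aux.pv θ j)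
        ++ ((List.range s).map (fun j => Stmt7Aux.pv θ (r + Stmt7Aux.pv δ j))
          ++ (List.range t).map (fun j => Stmt7Aux.pv θ (r + Stmt7Aux.pv δ (s+j)))) := by
    congr 1
    · exact List.map_congr_left (fun j hj => seg1 j (List.mem_range.mp hj))
    congr 1
    · exact List.map_congr_left (fun j hj => seg2 j (List.mem_range.mp hj))
    · exact List.map_congr_left (fun j hj => seg3 j (List.mem_range.mp hj))
  -- put everything together
  simp only [BraidMonoid.brShuffle]
  rw [Stmt7Aux.brShuffleShift_eq_W π hπsh hrsn 0,
    Stmt7Aux.brShuffleShift_eq_W σ hσsh (by omega) 0,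
    Stmt7Aux.brShuffleShift_eq_W θ hθsh hrn 0,
    Stmt7Aux.brShuffleShift_eq_W δ hδsh (by omega) r]
  rw [← key2, ← key4, hfinal]
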